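/- There exists ε > 0 such that for all real X with |X| < ε, F(1/4, -5/12; 1/3; X) = (1 - (5/4)X)^(1/4) · F(1/4, -1/12; 2/3; -X^2·(4X-5)^3 / (5X-4)^3). (This is the algebraic hypergeometric transformation induced by the degree 5 Klein pull-back covering Z = -X^2(4X-5)^3/(5X-4)^3 from local exponent differences (1/2,2/3,2/3) to the standard tetrahedral equation.) -/

import Mathlib

open Real

noncomputable def hc (a b c : ℝ) (n : ℕ) : ℝ :=
  (∏ i ∈ Finset.range n, (a + i)) * (∏ i ∈ Finset.range n, (b + i)) /
    ((∏ i ∈ Finset.range n, (c + i)) * (Nat.factorial n))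

lemma hc_zero (a b c : ℝ) : hc a b c 0 = 1 := by simp [hc]

lemma hc_succ {a b c : ℝ} (hcp : ∀ i : ℕ, (0:ℝ) < c + i) (n : ℕ) :
    hc a b c (n+1) = hc a b c n * ((a+n)*(b+n)) / ((c+n)*(n+1)) := by
  have hP : (0:ℝ) < ∏ i ∈ Finset.range n, (c + i) :=
    Finset.prod_pos fun i _ => hcp i
  have hF : (0:ℝ) < (Nat.factorial n : ℝ) := by positivity
  have h1 : (c:ℝ) + n ≠ 0 := (hcp n).ne'
  have h2 : ((n:ℝ)+1) ≠ 0 := by positivity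
  simp only [hc, Finset.prod_range_succ, Nat.factorial_succ, Nat.cast_mul, Nat.cast_add,
    Nat.cast_one]
  field_simp

lemma hc_bound {a b c : ℝ} (ha : ∀ n : ℕ, |a + n| ≤ n + 1) (hb : ∀ n : ℕ, |b + n| ≤ n + 1)
    (hcg : ∀ n : ℕ, (n:ℝ) + 1/3 ≤ c + n) (n : ℕ) :
    |hc a b c n| ≤ 3 * (n+1)^2 := by
  induction n with
  | zero => rw [hc_zero]; norm_num
  | succ n ih =>
      have hcp : ∀ i : ℕ, (0:ℝ) < c + i := fun i =>
        lt_of_lt_of_le (by positivity) (hcg i)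
      have hn0 : (0:ℝ) ≤ (n:ℝ) := Nat.cast_nonneg n
      rw [hc_succ hcp n]
      have hd : (0:ℝ) < (c+n)*((n:ℝ)+1) := by
        have := hcg n; nlinarith
      rw [abs_div, abs_mul, abs_mul]
      have hab : |a+(n:ℝ)| * |b+(n:ℝ)| ≤ ((n:ℝ)+1)*((n:ℝ)+1) :=
        mul_le_mul (ha n) (hb n) (abs_nonneg _) (by positivity)
      have habs : |(c+(n:ℝ))*((n:ℝ)+1)| = (c+n)*((n:ℝ)+1) := abs_of_pos hd
      rw [habs]
      rw [div_le_iff₀ hd]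
      have h1 : |hc a b c n| * |a+(n:ℝ)| * |b+(n:ℝ)| ≤ (3*((n:ℝ)+1)^2) * (((n:ℝ)+1)*((n:ℝ)+1)) := by
        have h2 : |hc a b c n| * (|a+(n:ℝ)| * |b+(n:ℝ)|) ≤ (3*((n:ℝ)+1)^2) * (((n:ℝ)+1)*((n:ℝ)+1)) :=
          mul_le_mul ih hab (by positivity) (by positivity)
        nlinarith [abs_nonneg (hc a b c n)]
      have key : ((n:ℝ)+1)^3 ≤ ((n:ℝ)+2)^2*((n:ℝ)+1/3) := by nlinarith
      have hr : (3*((n:ℝ)+1)^2) * (((n:ℝ)+1)*((n:ℝ)+1)) ≤ 3*((n:ℝ)+1+1)^2 * ((c+n)*((n:ℝ)+1)) := by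
        have h3 := hcg n
        nlinarith [mul_le_mul_of_nonneg_left h3 (show (0:ℝ) ≤ 3*((n:ℝ)+2)^2*((n:ℝ)+1) by positivity)]
      push_cast
      nlinarith

/-- geometric bound -/
def GB (q : ℕ → ℝ) (M ρ : ℝ) : Prop := ∀ n : ℕ, |q n| ≤ M / ρ ^ n

noncomputable def shiftC (q : ℕ → ℝ) (n : ℕ) : ℝ := (n+1) * q (n+1)

lemma nat_le_two_pow (n : ℕ) : ((n:ℝ) + 1) ≤ 2 ^ n := by
  induction n with
  | zero => norm_num
  | succ n ih =>
      have h2 : (0:ℝ) < 2 ^ n := by positivity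
      rw [pow_succ]
      push_cast
      nlinarith

lemma hc_gb {a b c : ℝ} (ha : ∀ n : ℕ, |a + n| ≤ n + 1) (hb : ∀ n : ℕ, |b + n| ≤ n + 1)
    (hcg : ∀ n : ℕ, (n:ℝ) + 1/3 ≤ c + n) : GB (hc a b c) 3 (1/4) := by
  intro n
  have h1 := hc_bound ha hb hcg n
  have h2 : ((n:ℝ)+1)^2 ≤ 4 ^ n := by
    have := nat_le_two_pow n
    calc ((n:ℝ)+1)^2 ≤ (2^n)^2 := by nlinarith [Nat.cast_nonneg (α := ℝ) n]
    _ = 4 ^ n := by rw [← pow_mul]; rw [show (4:ℝ) = 2^2 by norm_num, ← pow_mul]; ring_nf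
  have : (3:ℝ) / (1/4)^n = 3 * 4^n := by
    rw [div_eq_mul_inv, ← inv_pow]; norm_num
  rw [this]
  nlinarith [pow_pos (show (0:ℝ) < 4 by norm_num) n]

lemma gb_mono {q : ℕ → ℝ} {M ρ ρ' : ℝ} (h : GB q M ρ) (h0 : 0 < ρ') (hle : ρ' ≤ ρ) :
    GB q M ρ' := by
  intro n
  refine (h n).trans ?_
  have hM : 0 ≤ M := by have := (abs_nonneg (q 0)).trans (h 0); simpa using this
  exact div_le_div_of_nonneg_left hM (pow_pos h0 n) (pow_le_pow_left₀ h0.le hle n)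

lemma gb_nonneg {q : ℕ → ℝ} {M ρ : ℝ} (h : GB q M ρ) : 0 ≤ M := by
  have := (abs_nonneg (q 0)).trans (h 0); simpa using this

lemma gb_shift {q : ℕ → ℝ} {M ρ : ℝ} (h : GB q M ρ) (h0 : 0 < ρ) :
    GB (shiftC q) (2*M/ρ) (ρ/2) := by
  intro n
  have h1 := h (n+1)
  have h2 : |shiftC q n| = ((n:ℝ)+1) * |q (n+1)| := by
    rw [shiftC, abs_mul, abs_of_nonneg (by positivity : (0:ℝ) ≤ (n:ℝ)+1)]
  rw [h2]
  have hpow : (ρ/2)^n = ρ^n / 2^n := div_pow ρ 2 n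
  have h3 : ((n:ℝ)+1) * |q (n+1)| ≤ ((n:ℝ)+1) * (M / ρ^(n+1)) :=
    mul_le_mul_of_nonneg_left h1 (by positivity)
  refine h3.trans ?_
  have h4 := nat_le_two_pow n
  have hM := gb_nonneg h
  have e1 : ((n:ℝ)+1) * (M/ρ^(n+1)) = (((n:ℝ)+1)*M)/(ρ^n*ρ) := by rw [pow_succ]; ring
  have e2 : 2*M/ρ/((ρ/2)^n) = (2*M*2^n)/(ρ^n*ρ) := by
    rw [div_pow]
    rw [div_div_eq_mul_div]
    field_simp
    try ring
    try exact Or.inl trivial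
  rw [e1, e2, div_le_div_iff₀ (by positivity) (by positivity)]
  have key : M*((n:ℝ)+1)*(ρ^n*ρ) ≤ M*2^n*(ρ^n*ρ) :=
    mul_le_mul_of_nonneg_right (mul_le_mul_of_nonneg_left h4 hM)
      (le_of_lt (mul_pos (pow_pos h0 n) h0))
  nlinarith [mul_nonneg (mul_nonneg hM (pow_pos (show (0:ℝ) < 2 by norm_num) n).le)
    (mul_pos (pow_pos h0 n) h0).le]

lemma gb_summable {q : ℕ → ℝ} {M ρ : ℝ} (h : GB q M ρ) (h0 : 0 < ρ) {x : ℝ} (hx : |x| < ρ) :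
    Summable (fun n => q n * x ^ n) := by
  have hM := gb_nonneg h
  have hr1 : (0:ℝ) ≤ |x|/ρ := by positivity
  have hr2 : |x|/ρ < 1 := by rw [div_lt_one h0]; exact hx
  have hg : Summable (fun n => M * (|x|/ρ)^n) :=
    (summable_geometric_of_lt_one hr1 hr2).mul_left M
  refine Summable.of_abs (Summable.of_nonneg_of_le (fun n => abs_nonneg _) (fun n => ?_) hg)
  rw [abs_mul, abs_pow]
  calc |q n| * |x|^n ≤ (M / ρ^n) * |x|^n :=
        mul_le_mul_of_nonneg_right (h n) (by positivity)
    _ = M * (|x|/ρ)^n := by rw [div_pow]; field_simp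

lemma gb_deriv_summable {q : ℕ → ℝ} {M ρ : ℝ} (h : GB q M ρ) (h0 : 0 < ρ) :
    Summable (fun n : ℕ => M / ρ^n * (n * (ρ/2)^(n-1))) := by
  rw [← summable_nat_add_iff 1]
  have he : (fun m : ℕ => M / ρ^(m+1) * ((m+1) * (ρ/2)^m))
      = fun m : ℕ => (M/ρ) * (((m:ℝ)+1) * (1/2)^m) := by
    funext m
    rw [div_pow, pow_succ]
    field_simp
    rw [mul_assoc, ← mul_pow]; norm_num
  simp only [Nat.cast_add, Nat.cast_one, Nat.add_sub_cancel]
  rw [he]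
  apply Summable.mul_left
  have h1 : Summable (fun m : ℕ => (m:ℝ) * (1/2)^m) := by
    simpa using summable_pow_mul_geometric_of_norm_lt_one (R := ℝ) 1
      (r := 1/2) (by norm_num)
  have h2 : Summable (fun m : ℕ => ((1:ℝ)/2)^m) :=
    summable_geometric_of_lt_one (by norm_num) (by norm_num)
  simpa [add_mul] using h1.add h2

lemma gb_hasDerivAt {q : ℕ → ℝ} {M ρ : ℝ} (h : GB q M ρ) (h0 : 0 < ρ) {x : ℝ}
    (hx : |x| < ρ/2) :
    HasDerivAt (fun y => ∑' n, q n * y ^ n) (∑' n, shiftC q n * x ^ n) x := by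
  set u : ℕ → ℝ := fun n => M / ρ^n * (n * (ρ/2)^(n-1)) with hu_def
  have hu : Summable u := gb_deriv_summable h h0
  have hbound : ∀ (n : ℕ) (y : ℝ), y ∈ Metric.ball (0:ℝ) (ρ/2) →
      ‖q n * ((n:ℝ) * y^(n-1))‖ ≤ u n := by
    intro n y hy
    have hyb : |y| ≤ ρ/2 := le_of_lt (by simpa [Real.norm_eq_abs] using hy)
    rw [Real.norm_eq_abs, abs_mul, abs_mul, abs_pow]
    have h1 : |q n| * (|(n:ℝ)| * |y|^(n-1)) ≤ (M/ρ^n) * ((n:ℝ) * (ρ/2)^(n-1)) := by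
      have hyp : |y|^(n-1) ≤ (ρ/2)^(n-1) := pow_le_pow_left₀ (abs_nonneg y) hyb _
      have hn : |(n:ℝ)| = (n:ℝ) := abs_of_nonneg (Nat.cast_nonneg n)
      rw [hn]
      apply mul_le_mul (h n) _ (by positivity) (div_nonneg (gb_nonneg h) (by positivity))
      exact mul_le_mul_of_nonneg_left hyp (Nat.cast_nonneg n)
    simpa [mul_assoc] using h1
  have hmem : x ∈ Metric.ball (0:ℝ) (ρ/2) := by simpa [Real.norm_eq_abs] using hx
  have h0mem : (0:ℝ) ∈ Metric.ball (0:ℝ) (ρ/2) := by simp [Metric.mem_ball]; positivity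
  have hD := hasDerivAt_tsum_of_isPreconnected hu Metric.isOpen_ball
    (convex_ball (0:ℝ) (ρ/2)).isPreconnected
    (fun n y _ => (hasDerivAt_pow n y).const_mul (q n))
    hbound h0mem (gb_summable h h0 (by simpa using h0)) hmem
  refine HasDerivAt.congr_deriv hD (Eq.symm ?_)
  have hsum : Summable (fun n => q n * ((n:ℝ) * x^(n-1))) :=
    Summable.of_norm_bounded hu (fun n => hbound n x hmem)
  rw [Summable.tsum_eq_zero_add hsum]
  simp only [Nat.cast_zero, zero_mul, mul_zero, zero_add, Nat.cast_add, Nat.cast_one,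
    Nat.add_sub_cancel]
  exact tsum_congr fun m => by rw [shiftC]; ring

noncomputable def Tc (α β γ : ℝ) (q : ℕ → ℝ) (n : ℕ) : ℝ :=
  ((n:ℝ)+1)*((n:ℝ)+γ)*q (n+1) - ((n:ℝ)+α)*((n:ℝ)+β)*q n

lemma sum_ode {q : ℕ → ℝ} {x α β γ : ℝ}
    (hs : Summable (fun n => q n * x^n))
    (hs1 : Summable (fun n => shiftC q n * x^n))
    (hs2 : Summable (fun n => shiftC (shiftC q) n * x^n)) :
    x*(1-x) * (∑' n, shiftC (shiftC q) n * x^n)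
      + (γ - (α+β+1)*x) * (∑' n, shiftC q n * x^n)
      - (α*β) * (∑' n, q n * x^n) = ∑' n, Tc α β γ q n * x^n := by
  set Sq := ∑' n, q n * x^n with hSq
  set Sq1 := ∑' n, shiftC q n * x^n with hSq1
  set Sq2 := ∑' n, shiftC (shiftC q) n * x^n with hSq2
  have A1 : HasSum (fun n : ℕ => (n:ℝ) * q n * x^n) (x * Sq1) := by
    have h' : HasSum (fun n : ℕ => (fun m : ℕ => (m:ℝ) * q m * x^m) (n+1)) (x * Sq1) := by
      have h2 := hs1.hasSum.mul_left x
      have hfe2 : (fun n : ℕ => (fun m : ℕ => (m:ℝ) * q m * x^m) (n+1)) = fun n : ℕ => x * (shiftC q n * x^n) := by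
        funext n; simp only [shiftC]; push_cast; ring
      rw [hfe2]; exact h2
    have := (hasSum_nat_add_iff (f := fun m : ℕ => (m:ℝ) * q m * x^m) 1).mp h'
    simpa using this
  have A3 : HasSum (fun n : ℕ => (n:ℝ) * shiftC q n * x^n) (x * Sq2) := by
    have h' : HasSum (fun n : ℕ => (fun m : ℕ => (m:ℝ) * shiftC q m * x^m) (n+1)) (x * Sq2) := by
      have h2 := hs2.hasSum.mul_left x
      have hfe2 : (fun n : ℕ => (fun m : ℕ => (m:ℝ) * shiftC q m * x^m) (n+1)) = fun n : ℕ => x * (shiftC (shiftC q) n * x^n) := by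
        funext n; simp only [shiftC]; push_cast; ring
      rw [hfe2]; exact h2
    have := (hasSum_nat_add_iff (f := fun m : ℕ => (m:ℝ) * shiftC q m * x^m) 1).mp h'
    simpa using this
  have A2 : HasSum (fun n : ℕ => (n:ℝ) * ((n:ℝ)-1) * q n * x^n) (x^2 * Sq2) := by
    have h' : HasSum (fun n : ℕ => (fun m : ℕ => (m:ℝ) * ((m:ℝ)-1) * q m * x^m) (n+2))
        (x^2 * Sq2) := by
      have h2 := hs2.hasSum.mul_left (x^2)
      have hfe2 : (fun n : ℕ => (fun m : ℕ => (m:ℝ) * ((m:ℝ)-1) * q m * x^m) (n+1+1)) = fun n : ℕ => x^2 * (shiftC (shiftC q) n * x^n) := by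
        funext n; simp only [shiftC]; push_cast; ring
      rw [hfe2]; exact h2
    have := (hasSum_nat_add_iff (f := fun m : ℕ => (m:ℝ) * ((m:ℝ)-1) * q m * x^m) 2).mp h'
    simpa [Finset.sum_range_succ] using this
  have H := ((A3.add (hs1.hasSum.mul_left γ)).sub
    (A2.add ((A1.mul_left (α+β+1)).add (hs.hasSum.mul_left (α*β)))))
  have hfe : (fun n : ℕ => Tc α β γ q n * x^n)
      = fun n : ℕ => ((n:ℝ) * shiftC q n * x^n + γ * (shiftC q n * x^n))
        - ((n:ℝ) * ((n:ℝ)-1) * q n * x^n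
          + ((α+β+1) * ((n:ℝ) * q n * x^n) + α*β * (q n * x^n))) := by
    funext n; simp only [Tc, shiftC]; push_cast; ring
  rw [hfe, H.tsum_eq]
  ring

lemma hc_tc {a b c : ℝ} (hcp : ∀ i : ℕ, (0:ℝ) < c + i) (n : ℕ) :
    Tc a b c (hc a b c) n = 0 := by
  rw [Tc, hc_succ hcp n]
  have h1 : (c:ℝ) + n ≠ 0 := (hcp n).ne'
  have h2 : ((n:ℝ)+1) ≠ 0 := by positivity
  field_simp
  ring

lemma tsum_coeff_zero (q : ℕ → ℝ) : ∑' n, q n * (0:ℝ)^n = q 0 := by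
  rw [tsum_eq_single 0 (fun n hn => by simp [zero_pow hn])]
  simp

lemma eq_of_deriv_punctured (k : ℝ → ℝ) {ε : ℝ} (hε : 0 < ε) (hk0 : ContinuousAt k 0)
    (hd : ∀ y : ℝ, y ≠ 0 → |y| < ε → HasDerivAt k 0 y) :
    ∀ x : ℝ, |x| < ε → k x = k 0 := by
  intro x hx
  rcases lt_trichotomy x 0 with hneg | hzero | hpos
  · -- x < 0
    have hstep : ∀ δ : ℝ, x < δ → δ < 0 → k δ = k x := by
      intro δ h1 h2
      have hsub : ∀ y ∈ Set.Icc x δ, y ≠ 0 ∧ |y| < ε := by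
        intro y hy
        constructor
        · exact ne_of_lt (lt_of_le_of_lt hy.2 h2)
        · rw [abs_lt]; rw [abs_lt] at hx
          constructor <;> nlinarith [hy.1, hy.2]
      exact constant_of_has_deriv_right_zero
        (fun y hy => ((hd y (hsub y hy).1 (hsub y hy).2).continuousAt).continuousWithinAt)
        (fun y hy => (hd y (hsub y (Set.mem_Icc_of_Ico hy)).1
          (hsub y (Set.mem_Icc_of_Ico hy)).2).hasDerivWithinAt)
        δ (Set.right_mem_Icc.mpr h1.le)
    have hT : Filter.Tendsto k (nhdsWithin 0 (Set.Iio 0)) (nhds (k 0)) :=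
      hk0.tendsto.mono_left nhdsWithin_le_nhds
    have hEv : ∀ᶠ δ in nhdsWithin 0 (Set.Iio 0), k δ = k x := by
      filter_upwards [Ioo_mem_nhdsLT_of_mem (Set.mem_Ioc.mpr ⟨hneg, le_refl _⟩)] with δ hδ
      exact hstep δ hδ.1 hδ.2
    have hT2 : Filter.Tendsto k (nhdsWithin 0 (Set.Iio 0)) (nhds (k x)) := by
      rw [Filter.tendsto_congr' hEv]
      exact tendsto_const_nhds
    exact (tendsto_nhds_unique hT2 hT)
  · rw [hzero]
  · -- x > 0
    have hstep : ∀ δ : ℝ, 0 < δ → δ < x → k x = k δ := by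
      intro δ h1 h2
      have hsub : ∀ y ∈ Set.Icc δ x, y ≠ 0 ∧ |y| < ε := by
        intro y hy
        constructor
        · exact ne_of_gt (lt_of_lt_of_le h1 hy.1)
        · rw [abs_lt]; rw [abs_lt] at hx
          constructor <;> nlinarith [hy.1, hy.2]
      exact constant_of_has_deriv_right_zero
        (fun y hy => ((hd y (hsub y hy).1 (hsub y hy).2).continuousAt).continuousWithinAt)
        (fun y hy => (hd y (hsub y (Set.mem_Icc_of_Ico hy)).1
          (hsub y (Set.mem_Icc_of_Ico hy)).2).hasDerivWithinAt)
        x (Set.right_mem_Icc.mpr h2.le)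
    have hT : Filter.Tendsto k (nhdsWithin 0 (Set.Ioi 0)) (nhds (k 0)) :=
      hk0.tendsto.mono_left nhdsWithin_le_nhds
    have hEv : ∀ᶠ δ in nhdsWithin 0 (Set.Ioi 0), k δ = k x := by
      filter_upwards [Ioo_mem_nhdsGT_of_mem (Set.mem_Ico.mpr ⟨le_refl _, hpos⟩)] with δ hδ
      exact (hstep δ hδ.1 hδ.2).symm
    have hT2 : Filter.Tendsto k (nhdsWithin 0 (Set.Ioi 0)) (nhds (k x)) := by
      rw [Filter.tendsto_congr' hEv]
      exact tendsto_const_nhds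
    exact (tendsto_nhds_unique hT2 hT)

/-! ## Specialized objects -/

noncomputable def gC : ℕ → ℝ := hc (1/4) (-1/12) (2/3)
noncomputable def fC : ℕ → ℝ := hc (1/4) (-5/12) (1/3)

lemma gC_gb : GB gC 3 (1/4) := by
  apply hc_gb
  · intro n; rw [abs_of_nonneg (by positivity)]; linarith
  · intro n
    rw [abs_le]
    have : (0:ℝ) ≤ (n:ℝ) := Nat.cast_nonneg n
    constructor <;> norm_num <;> linarith
  · intro n; norm_num; linarith [Nat.cast_nonneg (α := ℝ) n]

lemma fC_gb : GB fC 3 (1/4) := by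
  apply hc_gb
  · intro n; rw [abs_of_nonneg (by positivity)]; linarith
  · intro n
    rw [abs_le]
    have : (0:ℝ) ≤ (n:ℝ) := Nat.cast_nonneg n
    constructor <;> norm_num <;> linarith
  · intro n; norm_num; linarith [Nat.cast_nonneg (α := ℝ) n]

noncomputable def gf (z : ℝ) : ℝ := ∑' n, gC n * z^n
noncomputable def gf1 (z : ℝ) : ℝ := ∑' n, shiftC gC n * z^n
noncomputable def gf2 (z : ℝ) : ℝ := ∑' n, shiftC (shiftC gC) n * z^n
noncomputable def ff (z : ℝ) : ℝ := ∑' n, fC n * z^n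
noncomputable def ff1 (z : ℝ) : ℝ := ∑' n, shiftC fC n * z^n
noncomputable def ff2 (z : ℝ) : ℝ := ∑' n, shiftC (shiftC fC) n * z^n

lemma gC1_gb : GB (shiftC gC) (2*3/(1/4)) ((1/4)/2) := gb_shift gC_gb (by norm_num)
lemma gC2_gb : GB (shiftC (shiftC gC)) (2*(2*3/(1/4))/((1/4)/2)) (((1/4)/2)/2) :=
  gb_shift gC1_gb (by norm_num)
lemma fC1_gb : GB (shiftC fC) (2*3/(1/4)) ((1/4)/2) := gb_shift fC_gb (by norm_num)
lemma fC2_gb : GB (shiftC (shiftC fC)) (2*(2*3/(1/4))/((1/4)/2)) (((1/4)/2)/2) :=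
  gb_shift fC1_gb (by norm_num)

lemma gf_hasDeriv {z : ℝ} (hz : |z| < 1/16) : HasDerivAt gf (gf1 z) z :=
  gb_hasDerivAt gC_gb (by norm_num) (by norm_num at hz ⊢; linarith)

lemma gf1_hasDeriv {z : ℝ} (hz : |z| < 1/16) : HasDerivAt gf1 (gf2 z) z :=
  gb_hasDerivAt gC1_gb (by norm_num) (by norm_num at hz ⊢; linarith)

lemma ff_hasDeriv {z : ℝ} (hz : |z| < 1/16) : HasDerivAt ff (ff1 z) z :=
  gb_hasDerivAt fC_gb (by norm_num) (by norm_num at hz ⊢; linarith)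

lemma ff1_hasDeriv {z : ℝ} (hz : |z| < 1/16) : HasDerivAt ff1 (ff2 z) z :=
  gb_hasDerivAt fC1_gb (by norm_num) (by norm_num at hz ⊢; linarith)

lemma gf_ode {z : ℝ} (hz : |z| < 1/16) :
    z*(1-z) * gf2 z + (2/3 - (7/6)*z) * gf1 z + (1/48) * gf z = 0 := by
  have hcp : ∀ i : ℕ, (0:ℝ) < 2/3 + i := fun i => by positivity
  have h := sum_ode (q := gC) (x := z) (α := 1/4) (β := -1/12) (γ := 2/3)
    (gb_summable gC_gb (by norm_num) (by norm_num at hz ⊢; linarith))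
    (gb_summable gC1_gb (by norm_num) (by norm_num at hz ⊢; linarith))
    (gb_summable gC2_gb (by norm_num) (by norm_num at hz ⊢; linarith))
  have hz0 : ∀ n : ℕ, Tc (1/4) (-1/12) (2/3) gC n = 0 := hc_tc hcp
  simp only [hz0, zero_mul, tsum_zero] at h
  rw [show gf2 z = ∑' n, shiftC (shiftC gC) n * z^n from rfl,
    show gf1 z = ∑' n, shiftC gC n * z^n from rfl,
    show gf z = ∑' n, gC n * z^n from rfl]
  linear_combination h

lemma ff_ode {z : ℝ} (hz : |z| < 1/16) :
    z*(1-z) * ff2 z + (1/3 - (5/6)*z) * ff1 z + (5/48) * ff z = 0 := by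
  have hcp : ∀ i : ℕ, (0:ℝ) < 1/3 + i := fun i => by positivity
  have h := sum_ode (q := fC) (x := z) (α := 1/4) (β := -5/12) (γ := 1/3)
    (gb_summable fC_gb (by norm_num) (by norm_num at hz ⊢; linarith))
    (gb_summable fC1_gb (by norm_num) (by norm_num at hz ⊢; linarith))
    (gb_summable fC2_gb (by norm_num) (by norm_num at hz ⊢; linarith))
  have hz0 : ∀ n : ℕ, Tc (1/4) (-5/12) (1/3) fC n = 0 := hc_tc hcp
  simp only [hz0, zero_mul, tsum_zero] at h
  rw [show ff2 z = ∑' n, shiftC (shiftC fC) n * z^n from rfl,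
    show ff1 z = ∑' n, shiftC fC n * z^n from rfl,
    show ff z = ∑' n, fC n * z^n from rfl]
  linear_combination h

/-! ## The pullback map and its derivatives -/

noncomputable def Nf (X : ℝ) : ℝ := -(X^2 * (4*X - 5)^3)
noncomputable def Df (X : ℝ) : ℝ := (5*X - 4)^3
noncomputable def N1f (X : ℝ) : ℝ := -(2*X*(4*X-5)^3 + 12*X^2*(4*X-5)^2)
noncomputable def D1f (X : ℝ) : ℝ := 15*(5*X-4)^2
noncomputable def N2f (X : ℝ) : ℝ := -(2*(4*X-5)^3 + 48*X*(4*X-5)^2 + 96*X^2*(4*X-5))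
noncomputable def D2f (X : ℝ) : ℝ := 150*(5*X-4)
noncomputable def Zf (X : ℝ) : ℝ := Nf X / Df X
noncomputable def Z1f (X : ℝ) : ℝ := (N1f X * Df X - Nf X * D1f X) / (Df X)^2
noncomputable def Z2f (X : ℝ) : ℝ :=
  ((N2f X * Df X - Nf X * D2f X) * (Df X)^2
    - (N1f X * Df X - Nf X * D1f X) * (2 * Df X * D1f X)) / ((Df X)^2)^2

lemma lin_hasDeriv (p q X : ℝ) : HasDerivAt (fun Y : ℝ => p*Y - q) p X := by
  simpa using ((hasDerivAt_id X).const_mul p).sub_const q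

lemma Nf_hasDeriv (X : ℝ) : HasDerivAt Nf (N1f X) X := by
  have h1 : HasDerivAt (fun Y : ℝ => Y^2) (2*X) X := by simpa using hasDerivAt_pow 2 X
  have h2 : HasDerivAt (fun Y : ℝ => (4*Y-5)^3) ((3:ℝ)*(4*X-5)^(3-1)*4) X :=
    (lin_hasDeriv 4 5 X).pow 3
  have h3 := (h1.mul h2).neg
  refine HasDerivAt.congr_deriv h3 (Eq.symm ?_)
  simp only [N1f]; ring

lemma Df_hasDeriv (X : ℝ) : HasDerivAt Df (D1f X) X := by
  have h2 : HasDerivAt (fun Y : ℝ => (5*Y-4)^3) ((3:ℝ)*(5*X-4)^(3-1)*5) X :=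
    (lin_hasDeriv 5 4 X).pow 3
  refine HasDerivAt.congr_deriv h2 (Eq.symm ?_)
  simp only [D1f]; ring

lemma N1f_hasDeriv (X : ℝ) : HasDerivAt N1f (N2f X) X := by
  have h1 : HasDerivAt (fun Y : ℝ => Y^2) (2*X) X := by simpa using hasDerivAt_pow 2 X
  have h2 : HasDerivAt (fun Y : ℝ => (4*Y-5)^3) ((3:ℝ)*(4*X-5)^(3-1)*4) X :=
    (lin_hasDeriv 4 5 X).pow 3
  have h2' : HasDerivAt (fun Y : ℝ => (4*Y-5)^2) ((2:ℝ)*(4*X-5)^(2-1)*4) X :=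
    (lin_hasDeriv 4 5 X).pow 2
  have h4 : HasDerivAt (fun Y : ℝ => 2*Y) (2:ℝ) X := by
    simpa using (hasDerivAt_id X).const_mul 2
  have h5 : HasDerivAt (fun Y : ℝ => 12*Y^2) (12*(2*X)) X := h1.const_mul 12
  have h6 := ((h4.mul h2).add (h5.mul h2')).neg
  refine HasDerivAt.congr_deriv h6 (Eq.symm ?_)
  simp only [N2f]; ring

lemma D1f_hasDeriv (X : ℝ) : HasDerivAt D1f (D2f X) X := by
  have h2' : HasDerivAt (fun Y : ℝ => (5*Y-4)^2) ((2:ℝ)*(5*X-4)^(2-1)*5) X :=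
    (lin_hasDeriv 5 4 X).pow 2
  have := h2'.const_mul 15
  refine HasDerivAt.congr_deriv this (Eq.symm ?_)
  simp only [D2f]; ring

lemma Zf_hasDeriv {X : ℝ} (hD : Df X ≠ 0) : HasDerivAt Zf (Z1f X) X := by
  exact (Nf_hasDeriv X).div (Df_hasDeriv X) hD

lemma Z1f_hasDeriv {X : ℝ} (hD : Df X ≠ 0) : HasDerivAt Z1f (Z2f X) X := by
  have hnum : HasDerivAt (fun Y => N1f Y * Df Y - Nf Y * D1f Y)
      ((N2f X * Df X + N1f X * D1f X) - (N1f X * D1f X + Nf X * D2f X)) X :=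
    ((N1f_hasDeriv X).mul (Df_hasDeriv X)).sub ((Nf_hasDeriv X).mul (D1f_hasDeriv X))
  have hden : HasDerivAt (fun Y => (Df Y)^2) ((2:ℝ)*(Df X)^(2-1)*(D1f X)) X :=
    (Df_hasDeriv X).pow 2
  have := hnum.div hden (pow_ne_zero 2 hD)
  refine HasDerivAt.congr_deriv this (Eq.symm ?_)
  simp only [Z2f]; ring

/-! ## The right-hand side function -/

noncomputable def uf (X : ℝ) : ℝ := 1 - 5/4 * X
noncomputable def vf (X : ℝ) : ℝ := uf X ^ ((1:ℝ)/4)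
noncomputable def vdf (X : ℝ) : ℝ := -(5/16) * uf X ^ ((1:ℝ)/4 - 1)
noncomputable def vddf (X : ℝ) : ℝ := -(75/256) * uf X ^ ((1:ℝ)/4 - 1 - 1)

lemma uf_hasDeriv (X : ℝ) : HasDerivAt uf (-(5/4)) X := by
  have := ((hasDerivAt_id X).const_mul (5/4:ℝ)).const_sub 1
  exact this.congr_deriv (by norm_num)

lemma vf_hasDeriv {X : ℝ} (hu : uf X ≠ 0) : HasDerivAt vf (vdf X) X := by
  have := (uf_hasDeriv X).rpow_const (p := (1:ℝ)/4) (Or.inl hu)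
  refine HasDerivAt.congr_deriv this (Eq.symm ?_)
  simp only [vdf]; ring

lemma vdf_hasDeriv {X : ℝ} (hu : uf X ≠ 0) : HasDerivAt vdf (vddf X) X := by
  have := ((uf_hasDeriv X).rpow_const (p := (1:ℝ)/4 - 1) (Or.inl hu)).const_mul (-(5/16) : ℝ)
  refine HasDerivAt.congr_deriv this (Eq.symm ?_)
  simp only [vddf]; ring

noncomputable def Rf (X : ℝ) : ℝ := vf X * gf (Zf X)
noncomputable def R1f (X : ℝ) : ℝ := vdf X * gf (Zf X) + vf X * (gf1 (Zf X) * Z1f X)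
noncomputable def R2f (X : ℝ) : ℝ :=
  vddf X * gf (Zf X) + 2 * vdf X * (gf1 (Zf X) * Z1f X)
    + vf X * (gf2 (Zf X) * Z1f X ^ 2) + vf X * (gf1 (Zf X) * Z2f X)

lemma Rf_hasDeriv {X : ℝ} (hu : uf X ≠ 0) (hD : Df X ≠ 0) (hZ : |Zf X| < 1/16) :
    HasDerivAt Rf (R1f X) X := by
  have hg : HasDerivAt (fun Y => gf (Zf Y)) (gf1 (Zf X) * Z1f X) X :=
    (gf_hasDeriv hZ).comp X (Zf_hasDeriv hD)
  exact (vf_hasDeriv hu).mul hg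

lemma R1f_hasDeriv {X : ℝ} (hu : uf X ≠ 0) (hD : Df X ≠ 0) (hZ : |Zf X| < 1/16) :
    HasDerivAt R1f (R2f X) X := by
  have hg : HasDerivAt (fun Y => gf (Zf Y)) (gf1 (Zf X) * Z1f X) X :=
    (gf_hasDeriv hZ).comp X (Zf_hasDeriv hD)
  have hg1 : HasDerivAt (fun Y => gf1 (Zf Y)) (gf2 (Zf X) * Z1f X) X :=
    (gf1_hasDeriv hZ).comp X (Zf_hasDeriv hD)
  have h1 := (vdf_hasDeriv hu).mul hg
  have h2 := (vf_hasDeriv hu).mul (hg1.mul (Z1f_hasDeriv hD))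
  refine HasDerivAt.congr_deriv (h1.add h2) (Eq.symm ?_)
  simp only [R2f, Pi.mul_apply]; ring

lemma basic_bounds {X : ℝ} (hX : |X| < 1/100) :
    0 < uf X ∧ Df X ≠ 0 ∧ |Zf X| < 1/16 ∧ (4*X - 5 ≠ 0) ∧ (1 - Zf X ≠ 0) := by
  obtain ⟨hxl, hxr⟩ := abs_lt.mp hX
  have hu : 0 < uf X := by rw [uf]; linarith
  have h5 : (3:ℝ) ≤ |5*X-4| := by rw [abs_of_neg (by linarith : 5*X-4 < 0)]; linarith
  have hD : Df X ≠ 0 := by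
    rw [Df]; exact pow_ne_zero 3 (by intro h; rw [sub_eq_zero] at h; nlinarith)
  have h45 : 4*X - 5 ≠ 0 := by intro h; nlinarith
  have hXsq : X^2 ≤ 1/10000 := by nlinarith
  have h4 : |4*X-5| ≤ 6 := by rw [abs_of_neg (by linarith : 4*X-5 < 0)]; linarith
  have hN : |Nf X| ≤ 216/10000 := by
    have : |Nf X| = X^2 * |4*X-5|^3 := by
      rw [Nf, abs_neg, abs_mul, abs_pow, abs_pow, sq_abs]
    rw [this]
    calc X^2 * |4*X-5|^3 ≤ (1/10000) * 6^3 :=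
          mul_le_mul hXsq (pow_le_pow_left₀ (abs_nonneg _) h4 3) (by positivity) (by norm_num)
      _ = 216/10000 := by norm_num
  have hDabs : (27:ℝ) ≤ |Df X| := by
    rw [Df, abs_pow]
    calc (27:ℝ) = 3^3 := by norm_num
      _ ≤ |5*X-4|^3 := pow_le_pow_left₀ (by norm_num) h5 3
  have hZ : |Zf X| < 1/16 := by
    rw [Zf, abs_div]
    calc |Nf X| / |Df X| ≤ (216/10000) / 27 :=
          div_le_div₀ (by norm_num) hN (by norm_num) hDabs
      _ < 1/16 := by norm_num
  have h1z : 1 - Zf X ≠ 0 := by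
    have := (abs_lt.mp hZ).2; intro h; rw [sub_eq_zero] at h; rw [← h] at this; norm_num at this
  exact ⟨hu, hD, hZ, h45, h1z⟩

set_option maxHeartbeats 1600000 in
lemma Rf_ode {X : ℝ} (hX0 : X ≠ 0) (hX : |X| < 1/100) :
    X*(1-X) * R2f X + (1/3 - 5/6*X) * R1f X + (5/48) * Rf X = 0 := by
  obtain ⟨hu, hD, hZ, h45, h1z⟩ := basic_bounds hX
  have hu' : uf X ≠ 0 := hu.ne'
  have hNf0 : Nf X ≠ 0 := by
    rw [Nf]; exact neg_ne_zero.mpr (mul_ne_zero (pow_ne_zero 2 hX0) (pow_ne_zero 3 h45))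
  have hz0 : Zf X ≠ 0 := div_ne_zero hNf0 hD
  have hDfN : Df X - Nf X ≠ 0 := by
    have h : Df X - Nf X = Df X * (1 - Zf X) := by
      rw [Zf]; field_simp
    rw [h]; exact mul_ne_zero hD h1z
  have hg2eq : gf2 (Zf X) =
      ((-(1/48)) * gf (Zf X) - (2/3 - 7/6 * Zf X) * gf1 (Zf X)) * (Df X)^2
        / (Nf X * (Df X - Nf X)) := by
    rw [eq_div_iff (mul_ne_zero hNf0 hDfN)]
    have hzz : Zf X * (1 - Zf X) * (Df X)^2 = Nf X * (Df X - Nf X) := by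
      rw [Zf]; field_simp
    have hode := gf_ode hZ
    linear_combination (Df X)^2 * hode - gf2 (Zf X) * hzz
  have e1 : uf X ^ ((1:ℝ)/4 - 1) = uf X ^ ((1:ℝ)/4) / uf X := by
    rw [Real.rpow_sub hu, Real.rpow_one]
  have e2 : uf X ^ ((1:ℝ)/4 - 1 - 1) = uf X ^ ((1:ℝ)/4) / (uf X)^2 := by
    rw [Real.rpow_sub hu, Real.rpow_one, e1, div_div, ← sq]
  simp only [Rf, R1f, R2f, vf, vdf, vddf]
  rw [hg2eq, e1, e2]
  simp only [Zf, Z1f, Z2f]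
  field_simp
  unfold Nf Df N1f D1f N2f D2f uf
  ring

/-! ## Wronskian -/

noncomputable def Wf (X : ℝ) : ℝ := ff X * R1f X - ff1 X * Rf X

lemma hX16 {X : ℝ} (hX : |X| < 1/100) : |X| < 1/16 := lt_trans hX (by norm_num)

lemma Wf_hasDeriv {X : ℝ} (hX : |X| < 1/100) :
    HasDerivAt Wf (ff X * R2f X - ff2 X * Rf X) X := by
  obtain ⟨hu, hD, hZ, h45, h1z⟩ := basic_bounds hX
  have h1 := (ff_hasDeriv (hX16 hX)).mul (R1f_hasDeriv hu.ne' hD hZ)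
  have h2 := (ff1_hasDeriv (hX16 hX)).mul (Rf_hasDeriv hu.ne' hD hZ)
  refine HasDerivAt.congr_deriv (h1.sub h2) (Eq.symm ?_)
  ring

lemma Wf_ode {X : ℝ} (hX0 : X ≠ 0) (hX : |X| < 1/100) :
    X*(1-X) * (ff X * R2f X - ff2 X * Rf X) + (1/3 - 5/6*X) * Wf X = 0 := by
  have h1 := Rf_ode hX0 hX
  have h2 := ff_ode (hX16 hX)
  simp only [Wf]
  linear_combination (ff X) * h1 - (Rf X) * h2

noncomputable def zf (X : ℝ) : ℝ := (X^2)^((1:ℝ)/6) * ((1-X)^((1:ℝ)/2) * Wf X)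

lemma zf_hasDeriv {X : ℝ} (hX0 : X ≠ 0) (hX : |X| < 1/100) : HasDerivAt zf 0 X := by
  have hx2 : (0:ℝ) < X^2 := by positivity
  have h1x : (0:ℝ) < 1 - X := by
    have := (abs_lt.mp hX).2; linarith
  have hA : HasDerivAt (fun Y : ℝ => (Y^2)^((1:ℝ)/6))
      ((2*X^(2-1)) * ((1:ℝ)/6) * (X^2)^((1:ℝ)/6 - 1)) X :=
    (hasDerivAt_pow 2 X).rpow_const (Or.inl hx2.ne')
  have hB : HasDerivAt (fun Y : ℝ => (1-Y)^((1:ℝ)/2))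
      ((-1) * ((1:ℝ)/2) * (1-X)^((1:ℝ)/2 - 1)) X := by
    have hb : HasDerivAt (fun Y : ℝ => 1 - Y) (-1) X := by
      simpa using (hasDerivAt_id X).const_sub 1
    exact hb.rpow_const (Or.inl h1x.ne')
  have hW := Wf_hasDeriv hX
  have H := hA.mul (hB.mul hW)
  have eA : (X^2)^((1:ℝ)/6 - 1) = (X^2)^((1:ℝ)/6) / X^2 := by
    rw [Real.rpow_sub hx2, Real.rpow_one]
  have eB : (1-X)^((1:ℝ)/2 - 1) = (1-X)^((1:ℝ)/2) / (1-X) := by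
    rw [Real.rpow_sub h1x, Real.rpow_one]
  have hode := Wf_ode hX0 hX
  have hval : (2*X^(2-1)) * ((1:ℝ)/6) * (X^2)^((1:ℝ)/6 - 1) * ((1-X)^((1:ℝ)/2) * Wf X)
      + (X^2)^((1:ℝ)/6) * ((-1) * ((1:ℝ)/2) * (1-X)^((1:ℝ)/2 - 1) * Wf X
        + (1-X)^((1:ℝ)/2) * (ff X * R2f X - ff2 X * Rf X))
      = ((X^2)^((1:ℝ)/6) * (1-X)^((1:ℝ)/2) / (X*(1-X)))
        * (X*(1-X) * (ff X * R2f X - ff2 X * Rf X) + (1/3 - 5/6*X) * Wf X) := by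
    rw [eA, eB]
    have hXne : X ≠ 0 := hX0
    have h1xne : (1:ℝ) - X ≠ 0 := h1x.ne'
    field_simp
    ring
  simp only [Pi.mul_apply] at H
  rw [hval, hode, mul_zero] at H
  exact H

lemma ff_zero : ff 0 = 1 := by
  rw [ff, tsum_coeff_zero]; exact hc_zero _ _ _

lemma Rf_zero : Rf 0 = 1 := by
  have h1 : Zf 0 = 0 := by simp [Zf, Nf]
  have h2 : gf (Zf 0) = 1 := by rw [h1, gf, tsum_coeff_zero]; exact hc_zero _ _ _
  have h3 : vf 0 = 1 := by
    rw [vf, uf]; norm_num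
  rw [Rf, h2, h3, mul_one]

lemma Wf_contAt : ContinuousAt Wf 0 := (Wf_hasDeriv (by norm_num)).continuousAt

lemma zf_contAt : ContinuousAt zf 0 := by
  have hA : ContinuousAt (fun Y : ℝ => (Y^2)^((1:ℝ)/6)) 0 :=
    ContinuousAt.rpow_const ((continuous_pow 2).continuousAt) (Or.inr (by norm_num))
  have hB : ContinuousAt (fun Y : ℝ => (1-Y)^((1:ℝ)/2)) 0 :=
    ContinuousAt.rpow_const ((continuous_const.sub continuous_id).continuousAt)
      (Or.inl (by norm_num))
  exact hA.mul (hB.mul Wf_contAt)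

lemma zf_zero : zf 0 = 0 := by
  rw [zf, show ((0:ℝ)^2) = 0 by norm_num,
    Real.zero_rpow (by norm_num : (1:ℝ)/6 ≠ 0), zero_mul]

lemma Wf_eq_zero {X : ℝ} (hX0 : X ≠ 0) (hX : |X| < 1/100) : Wf X = 0 := by
  have h := eq_of_deriv_punctured zf (by norm_num : (0:ℝ) < 1/100) zf_contAt
    (fun y hy0 hy => zf_hasDeriv hy0 hy) X hX
  rw [zf_zero] at h
  have hx2 : (0:ℝ) < X^2 := by positivity
  have h1x : (0:ℝ) < 1 - X := by have := (abs_lt.mp hX).2; linarith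
  have hA : (0:ℝ) < (X^2)^((1:ℝ)/6) := Real.rpow_pos_of_pos hx2 _
  have hB : (0:ℝ) < (1-X)^((1:ℝ)/2) := Real.rpow_pos_of_pos h1x _
  rw [zf] at h
  rcases mul_eq_zero.mp h with h' | h'
  · exact absurd h' hA.ne'
  rcases mul_eq_zero.mp h' with h'' | h''
  · exact absurd h'' hB.ne'
  · exact h''

lemma Rf_eq_ff : ∃ ε > 0, ∀ X : ℝ, |X| < ε → Rf X = ff X := by
  have hcont : ContinuousAt ff 0 := (ff_hasDeriv (by norm_num)).continuousAt
  obtain ⟨δ, hδ, hball⟩ := Metric.continuousAt_iff.mp hcont (1/2) (by norm_num)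
  set ε := min (1/100) δ with hε_def
  have hεpos : 0 < ε := lt_min (by norm_num) hδ
  have hffne : ∀ X : ℝ, |X| < ε → ff X ≠ 0 := by
    intro X hX
    have hd : dist X 0 < δ := by
      rw [Real.dist_eq, sub_zero]; exact lt_of_lt_of_le hX (min_le_right _ _)
    have := hball hd
    rw [Real.dist_eq, ff_zero] at this
    have := (abs_lt.mp this).1
    intro h; rw [h] at this; norm_num at this
  refine ⟨ε, hεpos, fun X hX => ?_⟩
  have hX100 : |X| < 1/100 := lt_of_lt_of_le hX (min_le_left _ _)
  set η : ℝ → ℝ := fun Y => Rf Y / ff Y with hη_def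
  have hη0 : ContinuousAt η 0 := by
    have hRc : ContinuousAt Rf 0 := by
      obtain ⟨hu, hD, hZ, h45, h1z⟩ := basic_bounds (by norm_num : |(0:ℝ)| < 1/100)
      exact (Rf_hasDeriv hu.ne' hD hZ).continuousAt
    exact hRc.div hcont (by rw [ff_zero]; norm_num)
  have hηd : ∀ y : ℝ, y ≠ 0 → |y| < ε → HasDerivAt η 0 y := by
    intro y hy0 hy
    have hy100 : |y| < 1/100 := lt_of_lt_of_le hy (min_le_left _ _)
    obtain ⟨hu, hD, hZ, h45, h1z⟩ := basic_bounds hy100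
    have hfney : ff y ≠ 0 := hffne y hy
    have hDiv := (Rf_hasDeriv hu.ne' hD hZ).div (ff_hasDeriv (hX16 hy100)) hfney
    have hnum : (R1f y * ff y - Rf y * ff1 y) / (ff y)^2 = 0 := by
      have : R1f y * ff y - Rf y * ff1 y = Wf y := by rw [Wf]; ring
      rw [this, Wf_eq_zero hy0 hy100, zero_div]
    rw [hnum] at hDiv
    exact hDiv
  have hconst := eq_of_deriv_punctured η hεpos hη0 hηd X hX
  have hη0val : η 0 = 1 := by
    rw [hη_def]; simp only; rw [Rf_zero, ff_zero]; norm_num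
  rw [hη0val] at hconst
  have := hffne X hX
  field_simp [hη_def] at hconst
  exact (div_eq_one_iff_eq this).mp hconst


/-- The Gauss hypergeometric series `F(a,b;c;z) = ∑ ((a)_n (b)_n / ((c)_n n!)) z^n`,
where `(q)_n` is the rising (Pochhammer) factorial. -/
noncomputable def hypgeo (a b c z : ℝ) : ℝ :=
  ∑' n : ℕ, ((∏ i ∈ Finset.range n, (a + i)) * (∏ i ∈ Finset.range n, (b + i)) /
    ((∏ i ∈ Finset.range n, (c + i)) * (Nat.factorial n))) * z ^ n

theorem stmt17 : ∃ ε > 0, ∀ X : ℝ, |X| < ε →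
    hypgeo (1/4) (-5/12) (1/3) X =
      (1 - (5/4) * X) ^ ((1 : ℝ)/4) *
        hypgeo (1/4) (-1/12) (2/3) (-(X^2 * (4*X - 5)^3) / (5*X - 4)^3) := by
  obtain ⟨ε, hε, h⟩ := Rf_eq_ff
  exact ⟨ε, hε, fun X hX => (h X hX).symm⟩
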